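/- Let S be a set of partial recursive codes (indices of partial computable functions on ℕ) that is recursively enumerable, and suppose every code c in S is total, i.e. c.eval(n) is defined for every natural number n. Then there exists a computable (total) function g : ℕ → ℕ such that for every code c in S there is a natural number n with c.eval(n) ≠ g(n) (in particular g is not the function computed by any code in S). -/

import Mathlib

open Nat.Partrec (Code)
open Nat.Partrec.Code

theorem computable_function_escaping_re_set_of_total_codes
    (S : Set Nat.Partrec.Code) (hS : REPred (· ∈ S))
    (htot : ∀ c ∈ S, ∀ n : ℕ, (c.eval n).Dom) :
    ∃ g : ℕ → ℕ, Computable g ∧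
      ∀ c ∈ S, ∃ n : ℕ, c.eval n ≠ Part.some (g n) := by
  -- F : ℕ →. ℕ with F k defined iff ofNat Code k ∈ S
  have hF : Partrec fun k : ℕ =>
      (Part.assert ((Denumerable.ofNat Code k) ∈ S) fun _ => Part.some 0) := by
    have := (hS.comp (Computable.ofNat Code)).map (Computable.const 0).to₂
    refine this.of_eq fun k => ?_
    ext m
    simp [Part.assert, Part.mem_map_iff]
  obtain ⟨e, he⟩ := Nat.Partrec.Code.exists_code.1 (Partrec.nat_iff.1 hF)
  -- the diagonal partial function
  set G : ℕ →. ℕ := fun n =>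
    cond ((evaln n.unpair.2 e n.unpair.1).isSome)
      (((Denumerable.ofNat Code n.unpair.1).eval n).map Nat.succ)
      (Part.some 0) with hG
  have hmem : ∀ n : ℕ, (evaln n.unpair.2 e n.unpair.1).isSome = true →
      (Denumerable.ofNat Code n.unpair.1) ∈ S := by
    intro n h
    obtain ⟨x, hx⟩ := Option.isSome_iff_exists.1 h
    have hx' := evaln_sound hx
    rw [he] at hx'
    obtain ⟨hp, -⟩ := Part.mem_assert_iff.1 hx'
    exact hp
  have hGpart : Partrec G := by
    apply Partrec.cond
    · exact Primrec.option_isSome.to_comp.comp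
        (primrec_evaln.to_comp.comp
          (((Computable.snd.comp Computable.unpair).pair (Computable.const e)).pair
            (Computable.fst.comp Computable.unpair)))
    · exact (eval_part.comp
        ((Computable.ofNat Code).comp (Computable.fst.comp Computable.unpair))
        Computable.id).map (Computable.succ.comp Computable.snd).to₂
    · exact Partrec.const' (Part.some 0)
  have hGtot : ∀ n, (G n).Dom := by
    intro n
    rw [hG]
    cases hb : (evaln n.unpair.2 e n.unpair.1).isSome
    · simp [hb]
    · simp only [hb, cond_true, Part.map_Dom]
      exact htot _ (hmem n hb) n
  obtain ⟨g, hgc, hgmem⟩ : ∃ g : ℕ → ℕ, Computable g ∧ ∀ n, g n ∈ G n :=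
    ⟨fun n => (G n).get (hGtot n), Partrec.of_eq_tot hGpart fun n => Part.get_mem _,
      fun n => Part.get_mem _⟩
  refine ⟨g, hgc, ?_⟩
  intro c hc
  -- find a stage t where e halts on encode c
  have hzero : (0 : ℕ) ∈ e.eval (Encodable.encode c) := by
    rw [he]
    exact Part.mem_assert_iff.2 ⟨by simpa using hc, Part.mem_some 0⟩
  obtain ⟨t, ht⟩ := evaln_complete.1 hzero
  refine ⟨Nat.pair (Encodable.encode c) t, ?_⟩
  have hb : (evaln (Nat.pair (Encodable.encode c) t).unpair.2 e
      (Nat.pair (Encodable.encode c) t).unpair.1).isSome = true := by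
    simp only [Nat.unpair_pair]
    exact Option.isSome_iff_exists.2 ⟨0, ht⟩
  have hGeq : G (Nat.pair (Encodable.encode c) t) =
      (c.eval (Nat.pair (Encodable.encode c) t)).map Nat.succ := by
    rw [hG]
    simp only [Nat.unpair_pair] at hb ⊢
    simp [hb]
  have hm := hgmem (Nat.pair (Encodable.encode c) t)
  rw [hGeq] at hm
  obtain ⟨m, hm', hms⟩ := (Part.mem_map_iff _).1 hm
  intro hEq
  rw [Part.eq_some_iff.2 hm'] at hEq
  have := Part.some_injective hEq
  omega
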